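/- Let f ∈ ℍ[X] and λ ∈ ℍ \ ℝ. Then λ is a spherical root of f if and only if there exists g ∈ ℍ[X] such that f = g · (X² − (tr λ : ℍ)·X + (n λ : ℍ)), i.e., f is a left multiple of the characteristic polynomial p_λ of λ. -/

import Mathlib

open Polynomial

/-- A spherical root of `f ∈ ℍ[X]`: a non-real `λ` such that every root of the
characteristic polynomial `p_λ(x) = x² − tr(λ)x + n(λ)` of `λ` is a root of `f`. -/
def SphericalRoot (f : Polynomial (Quaternion ℝ)) (lam : Quaternion ℝ) : Prop :=
  lam ∉ Set.range (algebraMap ℝ (Quaternion ℝ)) ∧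
    ∀ r : Quaternion ℝ,
      r ^ 2 - (2 * lam.re) • r + ((Quaternion.normSq lam : ℝ) : Quaternion ℝ) = 0 →
        Polynomial.eval r f = 0

namespace SphericalRootAux

/-- `C ↑a` for a real `a` commutes with every quaternion polynomial. -/
lemma commute_C_coe (a : ℝ) (g : Polynomial (Quaternion ℝ)) :
    Commute (C ((a : Quaternion ℝ))) g := by
  induction g using Polynomial.induction_on' with
  | add p q hp hq => exact hp.add_right hq
  | monomial n c =>
      rw [← C_mul_X_pow_eq_monomial]
      exact (Commute.mul_right
        (by rw [Commute, SemiconjBy, ← C_mul, ← C_mul, Quaternion.coe_commute])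
        ((commute_X_pow _ _).symm))

lemma quad_root_self (x : Quaternion ℝ) :
    x ^ 2 - (2 * x.re) • x + ((Quaternion.normSq x : ℝ) : Quaternion ℝ) = 0 := by
  have h2 := Quaternion.star_mul_self x
  rw [Quaternion.star_eq_two_re_sub x] at h2
  have hs : (2 * x.re) • x = (((2 * x.re : ℝ)) : Quaternion ℝ) * x := by
    rw [Quaternion.coe_mul_eq_smul]
  rw [pow_two, hs, ← h2]
  noncomm_ring

end SphericalRootAux

/- Theorem 3.12 (specialized to ℍ): `λ ∈ ℍ \ ℝ` is a spherical root of `f` iff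
`f` is a left multiple of the characteristic polynomial `p_λ` of `λ`. -/
theorem spherical_root_iff_left_multiple_of_char_poly
    (f : Polynomial (Quaternion ℝ)) (lam : Quaternion ℝ)
    (hlam : lam ∉ Set.range (algebraMap ℝ (Quaternion ℝ))) :
    SphericalRoot f lam ↔
      ∃ g : Polynomial (Quaternion ℝ),
        f = g * (X ^ 2 - C (((2 * lam.re : ℝ) : Quaternion ℝ)) * X +
          C (((Quaternion.normSq lam : ℝ) : Quaternion ℝ))) := by
  classical
  set q : Polynomial (Quaternion ℝ) :=
    X ^ 2 - C (((2 * lam.re : ℝ) : Quaternion ℝ)) * X +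
      C (((Quaternion.normSq lam : ℝ) : Quaternion ℝ)) with hq_def
  -- factorization of q
  have hfact : q = (X - C lam) * (X - C (star lam)) := by
    have h1 : lam + star lam = (((2 * lam.re : ℝ)) : Quaternion ℝ) :=
      Quaternion.self_add_star' lam
    have h2 : lam * star lam = (((Quaternion.normSq lam : ℝ)) : Quaternion ℝ) :=
      Quaternion.self_mul_star lam
    rw [hq_def, ← h1, ← h2]
    simp only [mul_sub, sub_mul, C_add, C_mul]
    rw [X_mul_C (star lam)]
    rw [pow_two]; noncomm_ring
  have hmonic : q.Monic := by
    rw [hfact]; exact (monic_X_sub_C lam).mul (monic_X_sub_C (star lam))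
  have hmap : q = ((X ^ 2 - C (2 * lam.re) * X + C ((Quaternion.normSq lam : ℝ)) :
      Polynomial ℝ)).map (algebraMap ℝ (Quaternion ℝ)) := by
    simp [hq_def, Polynomial.map_add, Polynomial.map_sub, Polynomial.map_mul,
      Polynomial.map_pow, Polynomial.map_ofNat, QuaternionAlgebra.coe_algebraMap]
  have hcoeff : ∀ (k : ℕ) (x : Quaternion ℝ), Commute (q.coeff k) x := by
    intro k x
    rw [hmap, coeff_map]
    exact Quaternion.coe_commute _ _
  have hqcomm : ∀ g : Polynomial (Quaternion ℝ), Commute q g := by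
    intro g
    rw [hq_def]
    exact ((((commute_X g).pow_left 2).sub_left
      ((SphericalRootAux.commute_C_coe _ g).mul_left (commute_X g))).add_left
      (SphericalRootAux.commute_C_coe _ g))
  have heval : ∀ r : Quaternion ℝ, q.eval r =
      r ^ 2 - (2 * lam.re) • r + ((Quaternion.normSq lam : ℝ) : Quaternion ℝ) := by
    intro r
    simp [hq_def, eval_C_mul, pow_two, Algebra.smul_def]
  have hevalmul : ∀ (g : Polynomial (Quaternion ℝ)) (r : Quaternion ℝ),
      (g * q).eval r = g.eval r * q.eval r := fun g r =>
    eval₂_mul_noncomm _ _ (fun k => hcoeff k r)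
  have hroot_lam : lam ^ 2 - (2 * lam.re) • lam +
      ((Quaternion.normSq lam : ℝ) : Quaternion ℝ) = 0 := SphericalRootAux.quad_root_self lam
  have hroot_star : (star lam) ^ 2 - (2 * lam.re) • (star lam) +
      ((Quaternion.normSq lam : ℝ) : Quaternion ℝ) = 0 := by
    simpa [Quaternion.re_star, Quaternion.normSq_star] using
      SphericalRootAux.quad_root_self (star lam)
  constructor
  · rintro ⟨-, hroots⟩
    refine ⟨f /ₘ q, ?_⟩
    have hdiv := (modByMonic_add_div f q).symm
    rw [(hqcomm (f /ₘ q)).eq] at hdiv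
    set rem := f %ₘ q with hrem_def
    have hdeg : rem.degree ≤ 1 := by
      have h2 := degree_modByMonic_lt f hmonic
      have hq2 : q.degree = 2 := by
        rw [hq_def]; compute_degree!
      rw [hq2] at h2
      exact Order.lt_succ_iff.mp (by exact_mod_cast h2)
    have hrem : rem = C (rem.coeff 1) * X + C (rem.coeff 0) :=
      eq_X_add_C_of_degree_le_one hdeg
    have keyeval : ∀ x : Quaternion ℝ,
        x ^ 2 - (2 * lam.re) • x + ((Quaternion.normSq lam : ℝ) : Quaternion ℝ) = 0 →
        rem.coeff 1 * x + rem.coeff 0 = 0 := by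
      intro x hx
      have hf := hroots x hx
      rw [hdiv, eval_add, hevalmul, heval, hx, mul_zero, add_zero] at hf
      rw [hrem] at hf
      simpa [eval_C_mul] using hf
    have h1 := keyeval lam hroot_lam
    have h2 := keyeval (star lam) hroot_star
    have hne : lam - star lam ≠ 0 := by
      intro h
      apply hlam
      have : star lam = lam := (sub_eq_zero.mp h).symm
      rw [Quaternion.star_eq_self] at this
      exact ⟨lam.re, by rw [this]; rfl⟩
    have hc : rem.coeff 1 = 0 := by
      have : rem.coeff 1 * (lam - star lam) = 0 := by
        have h3 : (rem.coeff 1 * lam + rem.coeff 0) -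
            (rem.coeff 1 * star lam + rem.coeff 0) = 0 := by rw [h1, h2, sub_zero]
        rw [mul_sub]
        simpa using h3
      rcases mul_eq_zero.mp this with h | h
      · exact h
      · exact absurd h hne
    have hd : rem.coeff 0 = 0 := by
      have := h1
      rw [hc, zero_mul, zero_add] at this
      exact this
    have hrem0 : rem = 0 := by rw [hrem, hc, hd]; simp
    rw [hrem0, zero_add] at hdiv
    exact hdiv
  · rintro ⟨g, rfl⟩
    refine ⟨hlam, fun r hr => ?_⟩
    rw [hevalmul g r, heval r, hr, mul_zero]
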